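/- Let L ≥ 1 and let f : [0,1] → ℝ be a measurable function with 0 ≤ f(u) ≤ 1 and f(u) ≤ L·u for all u ∈ [0,1]. Then ∫₀¹ f(u) du ≤ 1 - 1/(2L). -/

import Mathlib

/-- **Key integral estimate in Theorem 2(i)**. If `L ≥ 1` and `f : [0,1] → ℝ` is
measurable with `0 ≤ f(u) ≤ 1` and `f(u) ≤ L·u` on `[0,1]`, then
`∫₀¹ f ≤ 1 - 1/(2L)` (since `f ≤ min(L·u, 1)` and `∫₀¹ min(L·u,1) du = 1 - 1/(2L)`). -/
theorem stmt18 (L : ℝ) (hL : 1 ≤ L) (f : ℝ → ℝ) (hm : Measurable f)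
    (hf : ∀ u ∈ Set.Icc (0:ℝ) 1, 0 ≤ f u ∧ f u ≤ 1 ∧ f u ≤ L * u) :
    (∫ u in (0:ℝ)..1, f u) ≤ 1 - 1 / (2 * L) := by
  have hL0 : (0:ℝ) < L := lt_of_lt_of_le one_pos hL
  set c : ℝ := 1 / L with hc
  have hc0 : 0 < c := by positivity
  have hc1 : c ≤ 1 := by
    rw [hc, div_le_one hL0]; exact hL
  set g : ℝ → ℝ := fun u => min (L * u) 1 with hg
  have hgcont : Continuous g := by
    apply Continuous.min _ continuous_const
    exact continuous_const.mul continuous_id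
  have hfint : IntervalIntegrable f MeasureTheory.volume 0 1 := by
    rw [intervalIntegrable_iff]
    apply MeasureTheory.Measure.integrableOn_of_bounded (M := 1)
      (by simp [Set.uIoc_of_le (by norm_num : (0:ℝ) ≤ 1)]) hm.aestronglyMeasurable
    rw [MeasureTheory.ae_restrict_iff' measurableSet_uIoc]
    refine MeasureTheory.ae_of_all _ fun u hu => ?_
    rw [Set.uIoc_of_le (by norm_num : (0:ℝ) ≤ 1)] at hu
    have hu' : u ∈ Set.Icc (0:ℝ) 1 := ⟨le_of_lt hu.1, hu.2⟩
    obtain ⟨h1, h2, _⟩ := hf u hu'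
    rw [Real.norm_eq_abs, abs_le]; constructor <;> linarith
  have hmono : (∫ u in (0:ℝ)..1, f u) ≤ ∫ u in (0:ℝ)..1, g u := by
    apply intervalIntegral.integral_mono_on (by norm_num) hfint
      (hgcont.intervalIntegrable 0 1)
    intro u hu
    obtain ⟨h1, h2, h3⟩ := hf u hu
    exact le_min h3 h2
  refine hmono.trans (le_of_eq ?_)
  have hsplit : (∫ u in (0:ℝ)..c, g u) + (∫ u in c..1, g u) = ∫ u in (0:ℝ)..1, g u :=
    intervalIntegral.integral_add_adjacent_intervals
      (hgcont.intervalIntegrable 0 c) (hgcont.intervalIntegrable c 1)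
  rw [← hsplit]
  have h1 : (∫ u in (0:ℝ)..c, g u) = ∫ u in (0:ℝ)..c, L * u := by
    apply intervalIntegral.integral_congr
    intro u hu
    rw [Set.uIcc_of_le hc0.le] at hu
    have : L * u ≤ 1 := by
      calc L * u ≤ L * c := by nlinarith [hu.2]
        _ = 1 := by rw [hc, mul_one_div_cancel hL0.ne']
    simp [hg, min_eq_left this]
  have h2 : (∫ u in c..1, g u) = ∫ u in c..1, (1:ℝ) := by
    apply intervalIntegral.integral_congr
    intro u hu
    rw [Set.uIcc_of_le hc1] at hu
    have : (1:ℝ) ≤ L * u := by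
      have : c ≤ u := hu.1
      calc (1:ℝ) = L * c := by rw [hc, mul_one_div_cancel hL0.ne']
        _ ≤ L * u := by nlinarith
    simp [hg, min_eq_right this]
  rw [h1, h2]
  rw [intervalIntegral.integral_const_mul, integral_id, intervalIntegral.integral_const]
  rw [hc]
  field_simp [hL0.ne']
  linear_combination (2 * L - 2) * mul_inv_cancel₀ hL0.ne'
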